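/- arXiv:2103.06212 — 5 statements merged into one kernel-verified Lean document; each statement's English description precedes it below -/
import Mathlib

section
/- Let L ≥ 1 and 1 ≤ k ≤ L be integers. Let Y_1, …, Y_k be reals with Y_j ∈ [0,1] for all j and Σ_{j=1}^k Y_j ≤ 1, and let v_1 ≥ v_2 ≥ ⋯ ≥ v_k ≥ 0 be reals. Then Σ_{j=1}^k v_j Y_j ∏_{i=1}^{j-1} (1 − Y_i) ≥ (1 − (1 − 1/L)^L) · Σ_{j=1}^k v_j Y_j. -/
/-- Key rounding inequality (Fleischer et al.): for `Y j ∈ [0,1]` with total mass at most 1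
and nonincreasing nonnegative values `v`, the "first-success" weighted sum is at least a
`1 - (1 - 1/L)^L` fraction of the fractional value. -/
theorem stmt0 (L k : ℕ) (hL : 1 ≤ L) (hk1 : 1 ≤ k) (hkL : k ≤ L)
    (Y v : ℕ → ℝ)
    (hY : ∀ j < k, 0 ≤ Y j ∧ Y j ≤ 1)
    (hYsum : ∑ j ∈ Finset.range k, Y j ≤ 1)
    (hv0 : ∀ j < k, 0 ≤ v j)
    (hvmono : ∀ i j : ℕ, i ≤ j → j < k → v j ≤ v i) :
    (1 - (1 - 1 / (L : ℝ)) ^ L) * ∑ j ∈ Finset.range k, v j * Y j ≤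
      ∑ j ∈ Finset.range k, v j * Y j * ∏ i ∈ Finset.range j, (1 - Y i) := by
  have hLpos : (0:ℝ) < L := by exact_mod_cast hL
  have hL1 : (1:ℝ) ≤ L := by exact_mod_cast hL
  have hLinv : (0:ℝ) ≤ 1 - 1 / (L:ℝ) := by
    rw [sub_nonneg, div_le_one hLpos]; exact hL1
  set c : ℝ := 1 - (1 - 1 / (L : ℝ)) ^ L with hc
  -- telescoping identity
  have tel : ∀ m : ℕ, ∑ j ∈ Finset.range m, Y j * ∏ i ∈ Finset.range j, (1 - Y i)
      = 1 - ∏ j ∈ Finset.range m, (1 - Y j) := by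
    intro m
    induction m with
    | zero => simp
    | succ n ih => rw [Finset.sum_range_succ, Finset.prod_range_succ, ih]; ring
  -- convexity step
  have hconv : ∀ s : ℝ, 0 ≤ s → s ≤ 1 →
      (1 - s / L) ^ L ≤ (1 - s) + s * (1 - 1 / (L:ℝ)) ^ L := by
    intro s hs hs1
    have h := (convexOn_pow (𝕜 := ℝ) L).2 (Set.mem_Ici.2 (zero_le_one))
      (Set.mem_Ici.2 hLinv) (show (0:ℝ) ≤ 1 - s by linarith) hs
      (show (1 - s) + s = 1 by ring)
    simp only [smul_eq_mul] at h
    have h2 : (1 - s) * 1 + s * (1 - 1 / (L:ℝ)) = 1 - s / L := by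
      field_simp; ring
    rw [h2] at h
    simpa using h
  -- key prefix inequality
  have key : ∀ m : ℕ, m ≤ k →
      c * ∑ j ∈ Finset.range m, Y j ≤
        ∑ j ∈ Finset.range m, Y j * ∏ i ∈ Finset.range j, (1 - Y i) := by
    intro m hm
    set s : ℝ := ∑ j ∈ Finset.range m, Y j with hsdef
    have hsub : Finset.range m ⊆ Finset.range k := Finset.range_subset_range.2 hm
    have hs0 : 0 ≤ s := Finset.sum_nonneg fun j hj =>
      (hY j (hm.trans_lt' (Finset.mem_range.1 hj))).1
    have hs1 : s ≤ 1 := le_trans (Finset.sum_le_sum_of_subset_of_nonneg hsub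
      (fun j hj _ => (hY j (Finset.mem_range.1 hj)).1)) hYsum
    set Z : ℕ → ℝ := fun j => if j < m then Y j else 0 with hZ
    have hZ01 : ∀ j, 0 ≤ Z j ∧ Z j ≤ 1 := by
      intro j
      by_cases h : j < m
      · simpa [hZ, h] using hY j (lt_of_lt_of_le h hm)
      · simp [hZ, h]
    have hprodeq : ∏ j ∈ Finset.range m, (1 - Y j) = ∏ j ∈ Finset.range L, (1 - Z j) := by
      rw [← Finset.prod_subset (Finset.range_subset_range.2 (hm.trans hkL))
        (fun x _ hx => by
          have hxm : ¬ x < m := fun h => hx (Finset.mem_range.2 h)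
          simp [hZ, hxm])]
      exact Finset.prod_congr rfl fun j hj => by simp [hZ, Finset.mem_range.1 hj]
    have hsumeq : ∑ j ∈ Finset.range L, Z j = s := by
      rw [hsdef, ← Finset.sum_subset (Finset.range_subset_range.2 (hm.trans hkL))
        (fun x _ hx => by
          have hxm : ¬ x < m := fun h => hx (Finset.mem_range.2 h)
          simp [hZ, hxm])]
      exact Finset.sum_congr rfl fun j hj => by simp [hZ, Finset.mem_range.1 hj]
    -- AM-GM
    have hgm := Real.geom_mean_le_arith_mean_weighted (Finset.range L)
      (fun _ => (L:ℝ)⁻¹) (fun j => 1 - Z j)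
      (fun i _ => by positivity)
      (by simp [Finset.sum_const, Finset.card_range]; field_simp)
      (fun i _ => by show (0:ℝ) ≤ 1 - Z i; linarith [(hZ01 i).2])
    have hrhs : ∑ i ∈ Finset.range L, (L:ℝ)⁻¹ * (1 - Z i) = 1 - s / L := by
      rw [← Finset.mul_sum, Finset.sum_sub_distrib, Finset.sum_const, Finset.card_range,
        hsumeq]
      field_simp
      rw [nsmul_one]
    rw [hrhs] at hgm
    have hprod_le : ∏ j ∈ Finset.range L, (1 - Z j) ≤ (1 - s / L) ^ L := by
      have hpe : ∏ j ∈ Finset.range L, (1 - Z j)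
          = (∏ j ∈ Finset.range L, (1 - Z j) ^ ((L:ℝ)⁻¹)) ^ L := by
        rw [← Finset.prod_pow]
        refine (Finset.prod_congr rfl fun j _ => ?_)
        rw [← Real.rpow_natCast ((1 - Z j) ^ ((L:ℝ)⁻¹)) L,
          ← Real.rpow_mul (by linarith [(hZ01 j).2]), inv_mul_cancel₀ (ne_of_gt hLpos),
          Real.rpow_one]
      rw [hpe]
      exact pow_le_pow_left₀ (Finset.prod_nonneg fun j _ =>
        Real.rpow_nonneg (by linarith [(hZ01 j).2]) _) hgm L
    rw [tel m, hprodeq]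
    have h4 := hconv s hs0 hs1
    have h5 : c * s = s - s * (1 - 1 / (L:ℝ)) ^ L := by rw [hc]; ring
    clear_value c s Z
    linarith
  -- Abel summation
  set g : ℕ → ℝ := fun j => Y j * ∏ i ∈ Finset.range j, (1 - Y i) - c * Y j with hg
  have hG : ∀ m : ℕ, m ≤ k → 0 ≤ ∑ j ∈ Finset.range m, g j := by
    intro m hm
    have : ∑ j ∈ Finset.range m, g j
        = (∑ j ∈ Finset.range m, Y j * ∏ i ∈ Finset.range j, (1 - Y i))
          - c * ∑ j ∈ Finset.range m, Y j := by
      rw [Finset.mul_sum, ← Finset.sum_sub_distrib]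
    rw [this, sub_nonneg]
    exact key m hm
  have habel := Finset.sum_range_by_parts (M := ℝ) v g k
  simp only [smul_eq_mul] at habel
  have hnonneg : 0 ≤ ∑ j ∈ Finset.range k, v j * g j := by
    rw [habel]
    have h1 : 0 ≤ v (k - 1) * ∑ i ∈ Finset.range k, g i :=
      mul_nonneg (hv0 _ (Nat.sub_lt hk1 one_pos)) (hG k le_rfl)
    have h2 : ∑ i ∈ Finset.range (k - 1), (v (i + 1) - v i) * ∑ j ∈ Finset.range (i + 1), g j ≤ 0 := by
      refine Finset.sum_nonpos fun i hi => mul_nonpos_of_nonpos_of_nonneg ?_ ?_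
      · have hik : i + 1 < k := by
          have := Finset.mem_range.1 hi; omega
        linarith [hvmono i (i + 1) (Nat.le_succ i) hik]
      · exact hG (i + 1) (by have := Finset.mem_range.1 hi; omega)
    linarith
  have hfin : ∑ j ∈ Finset.range k, v j * g j
      = (∑ j ∈ Finset.range k, v j * Y j * ∏ i ∈ Finset.range j, (1 - Y i))
        - c * ∑ j ∈ Finset.range k, v j * Y j := by
    rw [Finset.mul_sum, ← Finset.sum_sub_distrib]
    exact Finset.sum_congr rfl fun j _ => by rw [hg]; ring
  linarith [hfin ▸ hnonneg]
end

section
/- Let k ≥ 1 and let Y_1, …, Y_k be reals with Y_j ∈ [0,1] for all j and Σ_{j=1}^k Y_j ≤ 1. Then 1 − ∏_{j=1}^k (1 − Y_j) ≥ (1 − 1/e) · Σ_{j=1}^k Y_j. -/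
/-- Unweighted rounding inequality: for `Y j ∈ [0,1]` with total mass at most 1,
`1 - ∏ (1 - Y j) ≥ (1 - 1/e) · ∑ Y j`. -/
theorem stmt1 (k : ℕ) (hk : 1 ≤ k) (Y : ℕ → ℝ)
    (hY : ∀ j < k, 0 ≤ Y j ∧ Y j ≤ 1)
    (hYsum : ∑ j ∈ Finset.range k, Y j ≤ 1) :
    (1 - 1 / Real.exp 1) * ∑ j ∈ Finset.range k, Y j ≤
      1 - ∏ j ∈ Finset.range k, (1 - Y j) := by
  set S := ∑ j ∈ Finset.range k, Y j with hS
  have hS0 : 0 ≤ S := Finset.sum_nonneg fun j hj => (hY j (Finset.mem_range.mp hj)).1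
  -- Step 1: product bound
  have hprod : ∏ j ∈ Finset.range k, (1 - Y j) ≤ Real.exp (-S) := by
    calc ∏ j ∈ Finset.range k, (1 - Y j)
        ≤ ∏ j ∈ Finset.range k, Real.exp (-(Y j)) := by
          apply Finset.prod_le_prod
          · intro j hj
            linarith [(hY j (Finset.mem_range.mp hj)).2]
          · intro j hj
            linarith [Real.add_one_le_exp (-(Y j))]
      _ = Real.exp (∑ j ∈ Finset.range k, -(Y j)) := (Real.exp_sum _ _).symm
      _ = Real.exp (-S) := by rw [← Finset.sum_neg_distrib]
  -- Step 2: convexity of exp: exp(-S) ≤ (1-S)·1 + S·(1/e)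
  have hconv : Real.exp (-S) ≤ (1 - S) + S * (1 / Real.exp 1) := by
    have h := convexOn_exp.2 (Set.mem_univ (0 : ℝ)) (Set.mem_univ (-1 : ℝ))
      (by linarith : (0:ℝ) ≤ 1 - S) hS0 (by ring)
    simp only [smul_eq_mul, Real.exp_zero] at h
    have : (1 - S) * 0 + S * (-1) = -S := by ring
    rw [this] at h
    calc Real.exp (-S) ≤ (1 - S) * 1 + S * Real.exp (-1) := h
      _ = (1 - S) + S * (1 / Real.exp 1) := by
          rw [Real.exp_neg]; ring
  have := hprod.trans hconv
  nlinarith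
end

section
/- Let Z_1, …, Z_k be independent {0,1}-valued random variables on a probability space with P(Z_j = 1) = Y_j, where Y_j ∈ [0,1] for all j and Σ_{j=1}^k Y_j ≤ 1, and let v_1 ≥ v_2 ≥ ⋯ ≥ v_k ≥ 0 be reals. Define the random variable W by W = v_J where J is the smallest index j with Z_j = 1, and W = 0 if Z_j = 0 for all j. Then E[W] = Σ_{j=1}^k v_j Y_j ∏_{i=1}^{j-1} (1 − Y_i), and consequently E[W] ≥ (1 − 1/e) · Σ_{j=1}^k v_j Y_j. -/
open MeasureTheory ProbabilityTheory Finset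

lemma abel_aux (v d : ℕ → ℝ) (hmono : ∀ n, v (n+1) ≤ v n)
    (hD : ∀ m, 0 ≤ ∑ j ∈ range m, d j) :
    ∀ m, v m * ∑ j ∈ range m, d j ≤ ∑ j ∈ range m, v j * d j := by
  intro m
  induction m with
  | zero => simp
  | succ n ih =>
    rw [sum_range_succ, sum_range_succ]
    have h1 : v (n+1) * (∑ j ∈ range n, d j + d n) ≤ v n * (∑ j ∈ range n, d j + d n) := by
      apply mul_le_mul_of_nonneg_right (hmono n)
      have := hD (n+1); rwa [sum_range_succ] at this
    have h2 : v n * (∑ j ∈ range n, d j + d n) = v n * ∑ j ∈ range n, d j + v n * d n := by ring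
    linarith

lemma telescope_aux (Y : ℕ → ℝ) (m : ℕ) :
    ∑ j ∈ range m, Y j * ∏ i ∈ range j, (1 - Y i)
      = 1 - ∏ j ∈ range m, (1 - Y j) := by
  induction m with
  | zero => simp
  | succ n ih => rw [sum_range_succ, prod_range_succ, ih]; ring

lemma key_bound_aux (Y : ℕ → ℝ) (h0 : ∀ i, 0 ≤ Y i) (h1 : ∀ i, Y i ≤ 1) (m : ℕ)
    (hs : ∑ j ∈ range m, Y j ≤ 1) :
    (1 - 1/Real.exp 1) * ∑ j ∈ range m, Y j ≤ 1 - ∏ j ∈ range m, (1 - Y j) := by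
  set s := ∑ j ∈ range m, Y j with hsdef
  have hs0 : 0 ≤ s := Finset.sum_nonneg fun i _ => h0 i
  have hprod : ∏ j ∈ range m, (1 - Y j) ≤ Real.exp (-s) := by
    have : Real.exp (-s) = ∏ j ∈ range m, Real.exp (-(Y j)) := by
      rw [hsdef, ← Real.exp_sum, ← Finset.sum_neg_distrib]
    rw [this]
    apply Finset.prod_le_prod (fun i _ => by linarith [h1 i])
      (fun i _ => by linarith [Real.add_one_le_exp (-(Y i))])
  have hconv : Real.exp (-s) ≤ 1 - (1 - 1/Real.exp 1) * s := by
    have h := convexOn_exp.2 (Set.mem_univ (0:ℝ)) (Set.mem_univ (-1:ℝ))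
      (by linarith : (0:ℝ) ≤ 1 - s) hs0 (by ring)
    simp only [smul_eq_mul, mul_zero, mul_neg, mul_one, zero_add, Real.exp_zero] at h
    simp only [Real.exp_neg] at h ⊢
    have : (1:ℝ) - s + s * (Real.exp 1)⁻¹ = 1 - (1 - 1/Real.exp 1) * s := by
      field_simp; ring
    linarith
  linarith

lemma prod_filter_lt_aux {k : ℕ} (j : Fin k) (f : ℕ → ℝ) :
    ∏ i ∈ Finset.univ.filter (· < j), f i.val = ∏ i ∈ Finset.range j.val, f i := by
  have himg : (Finset.univ.filter (· < j)).image Fin.val = Finset.range j.val := by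
    ext n
    simp only [Finset.mem_image, Finset.mem_filter, Finset.mem_univ, true_and,
      Finset.mem_range, Fin.lt_def]
    constructor
    · rintro ⟨i, hi, rfl⟩; exact hi
    · intro hn; exact ⟨⟨n, hn.trans j.isLt⟩, hn, rfl⟩
  rw [← himg, Finset.prod_image (fun a _ b _ h => Fin.val_injective h)]

/-- Per-passenger guarantee of the rounding/re-assignment step: if line `j` independently
receives the passenger with probability `Y j`, and the passenger is re-assigned to the line of
largest value among the lines that received her (values sorted in decreasing order), then the
expected contributed value `E[W]` equals `∑ v j Y j ∏_{i<j} (1 - Y i)`, and is at least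
`(1 - 1/e)` times the fractional value `∑ v j Y j`. -/
theorem stmt2 {Ω : Type*} [MeasurableSpace Ω] (P : Measure Ω) [IsProbabilityMeasure P]
    (k : ℕ) (hk : 1 ≤ k)
    (Z : Fin k → Ω → ℝ) (Y v : Fin k → ℝ)
    (hZmeas : ∀ j, Measurable (Z j))
    (hZ01 : ∀ j ω, Z j ω = 0 ∨ Z j ω = 1)
    (hindep : iIndepFun Z P)
    (hprob : ∀ j, P {ω | Z j ω = 1} = ENNReal.ofReal (Y j))
    (hY : ∀ j, 0 ≤ Y j ∧ Y j ≤ 1)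
    (hYsum : ∑ j, Y j ≤ 1)
    (hv0 : ∀ j, 0 ≤ v j)
    (hvmono : Antitone v)
    (W : Ω → ℝ)
    (hW : ∀ ω, W ω =
      if h : (Finset.univ.filter (fun j => Z j ω = 1)).Nonempty
      then v ((Finset.univ.filter (fun j => Z j ω = 1)).min' h)
      else 0) :
    (∫ ω, W ω ∂P) =
        ∑ j, v j * Y j * ∏ i ∈ Finset.univ.filter (· < j), (1 - Y i) ∧
      (1 - 1 / Real.exp 1) * ∑ j, v j * Y j ≤ ∫ ω, W ω ∂P := by
  classical
  -- the events
  set S : Fin k → Finset (Fin k) := fun j => Finset.univ.filter (· ≤ j) with hS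
  set sets : Fin k → Fin k → Set ℝ := fun j i => if i = j then {1} else {0} with hsets
  set A : Fin k → Set Ω := fun j => ⋂ i ∈ S j, Z i ⁻¹' sets j i with hA
  have hsetsmeas : ∀ j i, MeasurableSet (sets j i) := fun j i => by
    by_cases h : i = j <;> simp [hsets, h]
  have hAmeas : ∀ j, MeasurableSet (A j) := fun j =>
    (S j).measurableSet_biInter (fun i _ => (hZmeas i) (hsetsmeas j i))
  have hAmem : ∀ j ω, ω ∈ A j ↔ (Z j ω = 1 ∧ ∀ i, i < j → Z i ω = 0) := by
    intro j ω
    simp only [hA, Set.mem_iInter, Set.mem_preimage, hS, Finset.mem_filter, Finset.mem_univ,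
      true_and]
    constructor
    · intro h
      refine ⟨?_, fun i hi => ?_⟩
      · have := h j le_rfl
        simpa [hsets] using this
      · have := h i hi.le
        simpa [hsets, Fin.ne_of_lt hi] using this
    · rintro ⟨h1, h2⟩ i hile
      by_cases hij : i = j
      · subst hij; simpa [hsets] using h1
      · have hilt : i < j := lt_of_le_of_ne hile hij
        simpa [hsets, hij] using h2 i hilt
  -- preimage of {0} is the complement
  have h0c : ∀ i : Fin k, Z i ⁻¹' ({0} : Set ℝ) = {ω | Z i ω = 1}ᶜ := by
    intro i; ext ω
    simp only [Set.mem_preimage, Set.mem_singleton_iff, Set.mem_compl_iff, Set.mem_setOf_eq]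
    rcases hZ01 i ω with h | h <;> simp [h]
  have hP0 : ∀ i : Fin k, P (Z i ⁻¹' ({0} : Set ℝ)) = ENNReal.ofReal (1 - Y i) := by
    intro i
    have hmeas1 : MeasurableSet {ω | Z i ω = 1} := (hZmeas i) (measurableSet_singleton 1)
    rw [h0c i, prob_compl_eq_one_sub hmeas1, hprob i,
      ENNReal.ofReal_sub _ (hY i).1, ENNReal.ofReal_one]
  -- probability of A j
  have hprobA : ∀ j, P (A j) =
      ENNReal.ofReal (Y j * ∏ i ∈ Finset.univ.filter (· < j), (1 - Y i)) := by
    intro j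
    have hmul := hindep.measure_inter_preimage_eq_mul (S j) (fun i _ => hsetsmeas j i)
    rw [hA] at *
    rw [hmul]
    have hSins : S j = insert j (Finset.univ.filter (· < j)) := by
      ext i
      simp only [hS, Finset.mem_filter, Finset.mem_univ, true_and, Finset.mem_insert]
      constructor
      · intro h; rcases lt_or_eq_of_le h with h' | h'
        · exact Or.inr (by simpa using h')
        · exact Or.inl h'
      · rintro (rfl | h)
        · exact le_rfl
        · exact le_of_lt (by simpa using h)
    rw [hSins, Finset.prod_insert (by simp)]
    have hjj : P (Z j ⁻¹' sets j j) = ENNReal.ofReal (Y j) := by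
      have : sets j j = ({1} : Set ℝ) := by simp [hsets]
      rw [this, ← hprob j]
      rfl
    have hrest : ∏ i ∈ Finset.univ.filter (· < j), P (Z i ⁻¹' sets j i)
        = ∏ i ∈ Finset.univ.filter (· < j), ENNReal.ofReal (1 - Y i) := by
      apply Finset.prod_congr rfl
      intro i hi
      have hilt : i < j := by simpa using (Finset.mem_filter.mp hi).2
      have : sets j i = ({0} : Set ℝ) := by simp [hsets, Fin.ne_of_lt hilt]
      rw [this, hP0 i]
    rw [hjj, hrest, ← ENNReal.ofReal_prod_of_nonneg (fun i _ => by linarith [(hY i).2]),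
      ← ENNReal.ofReal_mul (hY j).1]
  -- pointwise decomposition of W
  have hWdecomp : ∀ ω, W ω = ∑ j, Set.indicator (A j) (fun _ => v j) ω := by
    intro ω
    rw [hW ω]
    by_cases hne : (Finset.univ.filter (fun j => Z j ω = 1)).Nonempty
    · rw [dif_pos hne]
      set m := (Finset.univ.filter (fun j => Z j ω = 1)).min' hne with hm
      have hmmem := Finset.min'_mem _ hne
      have hZm : Z m ω = 1 := (Finset.mem_filter.mp hmmem).2
      rw [Finset.sum_eq_single m]
      · rw [Set.indicator_of_mem]
        exact (hAmem m ω).2 ⟨hZm, fun i hi => by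
          rcases hZ01 i ω with h | h
          · exact h
          · exact absurd (Finset.min'_le _ i
              (Finset.mem_filter.mpr ⟨Finset.mem_univ i, h⟩)) (not_le.mpr hi)⟩
      · intro j _ hj
        rw [Set.indicator_of_notMem]
        intro hmem
        rcases (hAmem j ω).1 hmem with ⟨hZj, hzero⟩
        have hmle : m ≤ j := Finset.min'_le _ j
          (Finset.mem_filter.mpr ⟨Finset.mem_univ j, hZj⟩)
        have hmj : m < j := lt_of_le_of_ne hmle (fun e => hj e.symm)
        have h0 := hzero m hmj
        rw [h0] at hZm
        norm_num at hZm
      · intro h; exact absurd (Finset.mem_univ m) h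
    · rw [dif_neg hne]
      symm
      apply Finset.sum_eq_zero
      intro j _
      apply Set.indicator_of_notMem
      intro hmem
      exact hne ⟨j, Finset.mem_filter.mpr ⟨Finset.mem_univ j, ((hAmem j ω).1 hmem).1⟩⟩
  -- compute the integral
  have hint : ∫ ω, W ω ∂P
      = ∑ j, v j * (Y j * ∏ i ∈ Finset.univ.filter (· < j), (1 - Y i)) := by
    have hfun : (fun ω => W ω) = fun ω => ∑ j, Set.indicator (A j) (fun _ => v j) ω :=
      funext hWdecomp
    rw [hfun, integral_finset_sum _ (fun j _ => (integrable_const (v j)).indicator (hAmeas j))]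
    apply Finset.sum_congr rfl
    intro j _
    rw [integral_indicator_const (v j) (hAmeas j), Measure.real, hprobA j, smul_eq_mul,
      ENNReal.toReal_ofReal (mul_nonneg (hY j).1
        (Finset.prod_nonneg fun i _ => by linarith [(hY i).2]))]
    ring
  -- ℕ-indexed versions
  have hkpos : 0 < k := hk
  have hk1 : k - 1 < k := Nat.sub_lt hkpos one_pos
  set Y' : ℕ → ℝ := fun n => if h : n < k then Y ⟨n, h⟩ else 0 with hY'
  set v' : ℕ → ℝ := fun n => v ⟨min n (k-1), lt_of_le_of_lt (min_le_right _ _) hk1⟩ with hv'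
  have hY'0 : ∀ n, 0 ≤ Y' n := by
    intro n; simp only [hY']; split
    · exact (hY _).1
    · exact le_rfl
  have hY'1 : ∀ n, Y' n ≤ 1 := by
    intro n; simp only [hY']; split
    · exact (hY _).2
    · norm_num
  have hv'0 : ∀ n, 0 ≤ v' n := fun n => hv0 _
  have hv'mono : ∀ n, v' (n+1) ≤ v' n := by
    intro n
    apply hvmono
    simp only [Fin.mk_le_mk]
    exact min_le_min (Nat.le_succ n) le_rfl
  have hvalY : ∀ j : Fin k, Y' j.val = Y j := by
    intro j; simp [hY', j.isLt]
  have hvalv : ∀ j : Fin k, v' j.val = v j := by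
    intro j
    have hmin : min j.val (k-1) = j.val := Nat.min_eq_left (Nat.le_pred_of_lt j.isLt)
    simp [hv', hmin]
  have hprodconv : ∀ j : Fin k, ∏ i ∈ Finset.univ.filter (· < j), (1 - Y i)
      = ∏ i ∈ Finset.range j.val, (1 - Y' i) := by
    intro j
    rw [← prod_filter_lt_aux j (fun n => 1 - Y' n)]
    apply Finset.prod_congr rfl
    intro i _
    rw [hvalY i]
  have hsumconv1 : ∑ j, v j * (Y j * ∏ i ∈ Finset.univ.filter (· < j), (1 - Y i))
      = ∑ n ∈ range k, v' n * (Y' n * ∏ i ∈ range n, (1 - Y' i)) := by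
    rw [← Fin.sum_univ_eq_sum_range (fun n => v' n * (Y' n * ∏ i ∈ range n, (1 - Y' i))) k]
    apply Finset.sum_congr rfl
    intro j _
    rw [hvalY j, hvalv j, ← hprodconv j]
  have hsumconv2 : ∑ j, v j * Y j = ∑ n ∈ range k, v' n * Y' n := by
    rw [← Fin.sum_univ_eq_sum_range (fun n => v' n * Y' n) k]
    apply Finset.sum_congr rfl
    intro j _
    rw [hvalY j, hvalv j]
  have hY'k : ∑ n ∈ range k, Y' n = ∑ j, Y j := by
    rw [← Fin.sum_univ_eq_sum_range (fun n => Y' n) k]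
    exact Finset.sum_congr rfl (fun j _ => hvalY j)
  have hY'm : ∀ m, ∑ n ∈ range m, Y' n ≤ 1 := by
    intro m
    rcases le_total m k with h | h
    · calc ∑ n ∈ range m, Y' n ≤ ∑ n ∈ range k, Y' n :=
            Finset.sum_le_sum_of_subset_of_nonneg (Finset.range_subset_range.2 h)
              (fun i _ _ => hY'0 i)
        _ ≤ 1 := by rw [hY'k]; exact hYsum
    · have heq : ∑ n ∈ range m, Y' n = ∑ n ∈ range k, Y' n := by
        symm
        apply Finset.sum_subset (Finset.range_subset_range.2 h)
        intro x _ hxk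
        simp only [hY']
        rw [dif_neg (by simpa using hxk)]
      rw [heq, hY'k]; exact hYsum
  -- the inequality
  set c : ℝ := 1 - 1/Real.exp 1 with hcdef
  set d : ℕ → ℝ := fun n => Y' n * ∏ i ∈ range n, (1 - Y' i) - c * Y' n with hd
  have hD : ∀ m, 0 ≤ ∑ j ∈ range m, d j := by
    intro m
    have hkb := key_bound_aux Y' hY'0 hY'1 m (hY'm m)
    have ht := telescope_aux Y' m
    have : ∑ j ∈ range m, d j
        = ∑ j ∈ range m, Y' j * ∏ i ∈ range j, (1 - Y' i) - c * ∑ j ∈ range m, Y' j := by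
      rw [Finset.mul_sum, ← Finset.sum_sub_distrib]
    rw [this, ht]
    rw [← hcdef] at hkb
    linarith
  have habel := abel_aux v' d hv'mono hD k
  have h0 : 0 ≤ v' k * ∑ j ∈ range k, d j := mul_nonneg (hv'0 k) (hD k)
  have hsplit : ∑ j ∈ range k, v' j * d j
      = ∑ j ∈ range k, v' j * (Y' j * ∏ i ∈ range j, (1 - Y' i))
        - c * ∑ j ∈ range k, v' j * Y' j := by
    rw [Finset.mul_sum, ← Finset.sum_sub_distrib]
    apply Finset.sum_congr rfl
    intro j _
    simp only [hd]; ring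
  constructor
  · rw [hint]
    apply Finset.sum_congr rfl
    intro j _
    ring
  · rw [hint, hsumconv1, hsumconv2]
    linarith [habel, h0, hsplit]
end

section
/- Consider three lines ℓ1, ℓ2, ℓ3 and three passengers p1, p2, p3 with values v(ℓ1,p1) = v(ℓ2,p1) = 1, v(ℓ3,p1) = 0; v(ℓ1,p2) = v(ℓ3,p2) = 1, v(ℓ2,p2) = 0; v(ℓ1,p3) = 1, v(ℓ2,p3) = v(ℓ3,p3) = 0. An assignment is a function x mapping each passenger to a line or to 'unassigned'; x is feasible for a set S of open lines if every assigned passenger is assigned to a line in S, the set of passengers assigned to ℓ1 is either a subset of {p1, p2} or equal to {p3}, and at most one passenger is assigned to each of ℓ2 and ℓ3. For S ⊆ {ℓ1, ℓ2, ℓ3}, let w(S) be the maximum of Σ_p v(x(p), p) over assignments x feasible for S (with unassigned passengers contributing 0). Then w({ℓ1}) = 2, w({ℓ1, ℓ3}) = 2, w({ℓ1, ℓ2}) = 2, and w({ℓ1, ℓ2, ℓ3}) = 3. In particular, taking S₁ = {ℓ1} ⊂ S₂ = {ℓ1, ℓ2}, we have w(S₁ ∪ {ℓ3}) − w(S₁)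 < w(S₂ ∪ {ℓ3}) − w(S₂), so w is not submodular. -/
/-- Passenger-line values of Proposition 3.3: lines `0,1,2` correspond to `ℓ1,ℓ2,ℓ3`,
passengers `0,1,2` to `p1,p2,p3`. -/
def lineVal : Fin 3 → Fin 3 → ℝ := fun ℓ p =>
  if ℓ = 0 then 1
  else if ℓ = 1 then (if p = 0 then 1 else 0)
  else (if p = 1 then 1 else 0)

/-- An assignment `x` (passenger ↦ optional line) is feasible for the set `S` of open lines if
every assigned passenger is assigned to an open line, the passengers assigned to line `ℓ1 = 0`
form either a subset of `{p1, p2}` or exactly `{p3}`, and at most one passenger is assigned to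
each of lines `ℓ2 = 1` and `ℓ3 = 2`. -/
def feasibleAssignment (S : Finset (Fin 3)) (x : Fin 3 → Option (Fin 3)) : Prop :=
  (∀ p ℓ, x p = some ℓ → ℓ ∈ S) ∧
  (Finset.univ.filter (fun p => x p = some 0) ⊆ ({0, 1} : Finset (Fin 3)) ∨
    Finset.univ.filter (fun p => x p = some 0) = ({2} : Finset (Fin 3))) ∧
  (Finset.univ.filter (fun p => x p = some 1)).card ≤ 1 ∧
  (Finset.univ.filter (fun p => x p = some 2)).card ≤ 1

/-- Total value of an assignment (unassigned passengers contribute 0). -/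
def assignmentVal (x : Fin 3 → Option (Fin 3)) : ℝ :=
  ∑ p, (x p).elim 0 (fun ℓ => lineVal ℓ p)

/-- Natural-number version of the passenger-line values. -/
def natVal (o : Option (Fin 3)) (p : Fin 3) : ℕ :=
  o.elim 0 (fun ℓ =>
    if ℓ = 0 then 1
    else if ℓ = 1 then (if p = 0 then 1 else 0)
    else (if p = 1 then 1 else 0))

lemma assignmentVal_eq (x : Fin 3 → Option (Fin 3)) :
    assignmentVal x = ((∑ p, natVal (x p) p : ℕ) : ℝ) := by
  unfold assignmentVal natVal lineVal
  push_cast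
  refine Finset.sum_congr rfl fun p _ => ?_
  cases x p with
  | none => simp
  | some ℓ => fin_cases ℓ <;> simp

instance (S : Finset (Fin 3)) : DecidablePred (feasibleAssignment S) := fun x => by
  unfold feasibleAssignment; infer_instance

lemma bound1 : ∀ x : Fin 3 → Option (Fin 3), feasibleAssignment {0} x →
    (∑ p, natVal (x p) p) ≤ 2 := by decide

lemma bound2 : ∀ x : Fin 3 → Option (Fin 3), feasibleAssignment {0, 2} x →
    (∑ p, natVal (x p) p) ≤ 2 := by decide

lemma bound3 : ∀ x : Fin 3 → Option (Fin 3), feasibleAssignment {0, 1} x →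
    (∑ p, natVal (x p) p) ≤ 2 := by decide

lemma bound4 : ∀ x : Fin 3 → Option (Fin 3), feasibleAssignment {0, 1, 2} x →
    (∑ p, natVal (x p) p) ≤ 3 := by decide

lemma w_eq (w : Finset (Fin 3) → ℝ)
    (hw : ∀ S, IsGreatest {y | ∃ x, feasibleAssignment S x ∧ y = assignmentVal x} (w S))
    (S : Finset (Fin 3)) (n : ℕ) (x₀ : Fin 3 → Option (Fin 3))
    (hx₀ : feasibleAssignment S x₀) (hval : assignmentVal x₀ = n)
    (hub : ∀ x : Fin 3 → Option (Fin 3), feasibleAssignment S x → (∑ p, natVal (x p) p) ≤ n) :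
    w S = n := by
  obtain ⟨⟨x, hx, hxe⟩, hgr⟩ := hw S
  have h1 : w S ≤ n := by
    rw [hxe, assignmentVal_eq]
    exact_mod_cast hub x hx
  have h2 : (n : ℝ) ≤ w S := by
    have := hgr ⟨x₀, hx₀, rfl⟩
    rw [hval] at this
    exact this
  linarith

/-- Proposition 3.3: the welfare function `w` (optimal assignment value over feasible
assignments to a set of open lines) satisfies `w {ℓ1} = 2`, `w {ℓ1,ℓ3} = 2`, `w {ℓ1,ℓ2} = 2`,
`w {ℓ1,ℓ2,ℓ3} = 3`; hence the marginal gain of `ℓ3` at `{ℓ1}` is strictly smaller than at the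
superset `{ℓ1,ℓ2}`, so `w` is not submodular. -/
theorem stmt8 (w : Finset (Fin 3) → ℝ)
    (hw : ∀ S, IsGreatest {y | ∃ x, feasibleAssignment S x ∧ y = assignmentVal x} (w S)) :
    w {0} = 2 ∧ w {0, 2} = 2 ∧ w {0, 1} = 2 ∧ w {0, 1, 2} = 3 ∧
    w ({0} ∪ {2}) - w {0} < w ({0, 1} ∪ {2}) - w {0, 1} ∧
    ¬ (∀ s t : Finset (Fin 3), s ⊆ t → ∀ ℓ : Fin 3,
        w (insert ℓ t) - w t ≤ w (insert ℓ s) - w s) := by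
  have hx2 : assignmentVal ![some 0, some 0, none] = (2 : ℕ) := by
    simp [assignmentVal, Fin.sum_univ_three, lineVal]
    norm_num
  have hx3 : assignmentVal ![some 1, some 2, some 0] = (3 : ℕ) := by
    simp [assignmentVal, Fin.sum_univ_three, lineVal]
    norm_num
  have hf1 : feasibleAssignment {0} ![some 0, some 0, none] := by decide
  have hf2 : feasibleAssignment {0, 2} ![some 0, some 0, none] := by decide
  have hf3 : feasibleAssignment {0, 1} ![some 0, some 0, none] := by decide
  have hf4 : feasibleAssignment {0, 1, 2} ![some 1, some 2, some 0] := by decide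
  have e1 : w {0} = 2 := by
    have := w_eq w hw {0} 2 _ hf1 hx2 bound1; exact_mod_cast this
  have e2 : w {0, 2} = 2 := by
    have := w_eq w hw {0, 2} 2 _ hf2 hx2 bound2; exact_mod_cast this
  have e3 : w {0, 1} = 2 := by
    have := w_eq w hw {0, 1} 2 _ hf3 hx2 bound3; exact_mod_cast this
  have e4 : w {0, 1, 2} = 3 := by
    have := w_eq w hw {0, 1, 2} 3 _ hf4 hx3 bound4; exact_mod_cast this
  have u1 : ({0} ∪ {2} : Finset (Fin 3)) = {0, 2} := by decide
  have u2 : ({0, 1} ∪ {2} : Finset (Fin 3)) = {0, 1, 2} := by decide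
  have i1 : (insert 2 {0, 1} : Finset (Fin 3)) = {0, 1, 2} := by decide
  have i2 : (insert 2 {0} : Finset (Fin 3)) = {0, 2} := by decide
  refine ⟨e1, e2, e3, e4, ?_, ?_⟩
  · rw [u1, u2, e1, e2, e3, e4]; norm_num
  · intro h
    have := h {0} {0, 1} (by decide) 2
    rw [i1, i2, e1, e2, e3, e4] at this
    linarith
end

section
/- For every ε ∈ (0,1): the maximum of y₁ + y₂ over y = (y₁, y₂) with y₁, y₂ ∈ {0,1} and y₁ + y₂ ≤ 2 − ε equals 1, whereas the maximum of y₁ + y₂ over y = (y₁, y₂) with y₁, y₂ ∈ [0,1] and y₁ + y₂ ≤ 2 − ε equals 2 − ε. Consequently, for every γ > 1/2 there exists ε ∈ (0,1) for which the ratio of the integer optimum to the fractional optimum, namely 1/(2 − ε), is strictly less than γ. -/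
/-- Proposition 3.4 (integrality gap is no better than 1/2): for every `ε ∈ (0,1)`, the integer
program `max y₁ + y₂` over `y ∈ {0,1}²` with `y₁ + y₂ ≤ 2 - ε` has optimum `1`, while its LP
relaxation over `[0,1]²` has optimum `2 - ε`; consequently the gap `1/(2-ε)` can be made
smaller than any `γ > 1/2`. -/
theorem stmt9 :
    (∀ ε : ℝ, 0 < ε → ε < 1 →
      IsGreatest {s | ∃ y₁ y₂ : ℝ, (y₁ = 0 ∨ y₁ = 1) ∧ (y₂ = 0 ∨ y₂ = 1) ∧
        y₁ + y₂ ≤ 2 - ε ∧ s = y₁ + y₂} 1 ∧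
      IsGreatest {s | ∃ y₁ y₂ : ℝ, 0 ≤ y₁ ∧ y₁ ≤ 1 ∧ 0 ≤ y₂ ∧ y₂ ≤ 1 ∧
        y₁ + y₂ ≤ 2 - ε ∧ s = y₁ + y₂} (2 - ε)) ∧
    (∀ γ : ℝ, 1 / 2 < γ → ∃ ε : ℝ, 0 < ε ∧ ε < 1 ∧ 1 / (2 - ε) < γ) := by
  constructor
  · intro ε hε0 hε1
    constructor
    · constructor
      · exact ⟨1, 0, Or.inr rfl, Or.inl rfl, by linarith, by ring⟩
      · rintro s ⟨y₁, y₂, h1, h2, hb, rfl⟩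
        rcases h1 with rfl | rfl <;> rcases h2 with rfl | rfl <;> linarith
    · constructor
      · exact ⟨1, 1 - ε, by norm_num, by norm_num, by linarith, by linarith, by linarith,
          by ring⟩
      · rintro s ⟨y₁, y₂, _, _, _, _, hb, rfl⟩
        exact hb
  · intro γ hγ
    have hγ0 : 0 < γ := by linarith
    have hpos : 0 < 2 - 1 / γ := by
      rw [sub_pos, div_lt_iff₀ hγ0]; linarith
    refine ⟨min (1/2) ((2 - 1/γ)/2), by positivity, ?_, ?_⟩
    · calc min (1/2) ((2 - 1/γ)/2) ≤ 1/2 := min_le_left _ _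
        _ < 1 := by norm_num
    · have h1 : min (1/2) ((2 - 1/γ)/2) < 2 - 1/γ :=
        lt_of_le_of_lt (min_le_right _ _) (by linarith)
      have h2 : 0 < 2 - min (1/2) ((2 - 1/γ)/2) := by
        have := min_le_left (1/2 : ℝ) ((2 - 1/γ)/2); linarith
      rw [div_lt_iff₀ h2]
      have : 1/γ < 2 - min (1/2) ((2 - 1/γ)/2) := by linarith
      calc (1:ℝ) = γ * (1/γ) := by field_simp
        _ < γ * (2 - min (1/2) ((2 - 1/γ)/2)) := by
            exact mul_lt_mul_of_pos_left this hγ0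
end
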